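/- Let E be a real normed vector space, ⟦·,·⟧ : E × E → E a continuous bilinear antisymmetric map, and A : E → E a continuous linear map. Suppose u0, v, w ∈ E and real constants λ, α, ζ satisfy ⟦u0, A u0⟧ = 0, A v = α v, A w = α w, ⟦v, A u0⟧ = λ·α·w, ⟦w, A u0⟧ = −λ·α·v, ⟦u0, v⟧ = −ζ·w, and ⟦u0, w⟧ = ζ·v. Then the curve U_R : ℝ → E defined by U_R(t) = u0 + cos((λ−ζ)t)·v − sin((λ−ζ)t)·w satisfies (d/dt)(A(U_R(t))) + ⟦U_R(t), A(U_R(t))⟧ = 0 for all t ∈ ℝ. -/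

import Mathlib

/-- The real-valued part of Theorem 2.3 in abstract form.
Under the real and imaginary parts of the simultaneous eigenvalue hypotheses,
the curve `U_R t = u0 + cos((λ-ζ)t) • v - sin((λ-ζ)t) • w` satisfies
`(d/dt)(A (U_R t)) + ⟦U_R t, A (U_R t)⟧ = 0`. -/
theorem statement1 {E : Type*} [NormedAddCommGroup E] [NormedSpace ℝ E]
    (B : E →L[ℝ] E →L[ℝ] E) (hB : ∀ x y : E, B x y = -B y x)
    (A : E →L[ℝ] E) (u0 v w : E) (lam alpha zeta : ℝ)
    (h1 : B u0 (A u0) = 0)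
    (h2 : A v = alpha • v)
    (h3 : A w = alpha • w)
    (h4 : B v (A u0) = (lam * alpha) • w)
    (h5 : B w (A u0) = -((lam * alpha) • v))
    (h6 : B u0 v = -(zeta • w))
    (h7 : B u0 w = zeta • v) :
    ∀ t : ℝ,
      HasDerivAt
        (fun s : ℝ =>
          A (u0 + Real.cos ((lam - zeta) * s) • v - Real.sin ((lam - zeta) * s) • w))
        (-(B (u0 + Real.cos ((lam - zeta) * t) • v - Real.sin ((lam - zeta) * t) • w)
            (A (u0 + Real.cos ((lam - zeta) * t) • v - Real.sin ((lam - zeta) * t) • w)))) t := by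
  intro t
  set k : ℝ := lam - zeta with hk
  have hvw : B w v = -B v w := hB w v
  have hlin : HasDerivAt (fun s : ℝ => k * s) k t := by
    simpa using (hasDerivAt_id t).const_mul k
  have hc : HasDerivAt (fun s : ℝ => Real.cos (k * s)) (-Real.sin (k * t) * k) t :=
    (Real.hasDerivAt_cos (k * t)).comp t hlin
  have hs : HasDerivAt (fun s : ℝ => Real.sin (k * s)) (Real.cos (k * t) * k) t :=
    (Real.hasDerivAt_sin (k * t)).comp t hlin
  have hf : HasDerivAt
      (fun s : ℝ => u0 + Real.cos (k * s) • v - Real.sin (k * s) • w)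
      ((-Real.sin (k * t) * k) • v - (Real.cos (k * t) * k) • w) t := by
    simpa [Pi.add_def, Pi.sub_def] using ((hasDerivAt_const t u0).add (hc.smul_const v)).sub (hs.smul_const w)
  have hAf := A.hasFDerivAt.comp_hasDerivAt t hf
  convert hAf using 1
  · rfl
  set c := Real.cos (k * t)
  set s := Real.sin (k * t)
  simp only [map_add, map_sub, map_smul, ContinuousLinearMap.add_apply,
    ContinuousLinearMap.sub_apply, ContinuousLinearMap.smul_apply, ContinuousLinearMap.map_smul,
    ContinuousLinearMap.map_sub, ContinuousLinearMap.map_add,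
    h1, h2, h3, h4, h5, h6, h7, hvw, smul_smul, smul_neg, smul_sub, smul_add]
  have hBvv : B v v = 0 := by
    have := hB v v
    have h2' : B v v + B v v = 0 := by nth_rewrite 2 [this]; simp
    have : (2 : ℝ) • B v v = 0 := by rw [two_smul]; exact h2'
    simpa using (smul_eq_zero.mp this).resolve_left (by norm_num)
  have hBww : B w w = 0 := by
    have := hB w w
    have h2' : B w w + B w w = 0 := by nth_rewrite 2 [this]; simp
    have : (2 : ℝ) • B w w = 0 := by rw [two_smul]; exact h2'
    simpa using (smul_eq_zero.mp this).resolve_left (by norm_num)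
  simp only [hBvv, hBww, smul_zero]
  have hk2 : lam - zeta = k := hk.symm
  module
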